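/- Let D be an m × x zero-one matrix such that D^T D has all entries positive, and let s ∈ ℝ^x have nonnegative entries summing to 1. Then for every integer b with 1 ≤ b ≤ m, max_i (D s)_i ≥ min((b+1)/m, 1/b). -/

import Mathlib

open Finset

theorem stmt_7 (m x : ℕ) (D : Matrix (Fin m) (Fin x) ℝ)
    (hD : ∀ i j, D i j = 0 ∨ D i j = 1)
    (hloc : ∀ j k, 0 < (D.transpose * D) j k)
    (s : Fin x → ℝ) (hs : ∀ j, 0 ≤ s j) (hsum : ∑ j, s j = 1)
    (b : ℕ) (hb1 : 1 ≤ b) (hbm : b ≤ m) :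
    ∃ i, min ((b + 1 : ℝ) / m) (1 / (b : ℝ)) ≤ D.mulVec s i := by
  have hm : 0 < m := lt_of_lt_of_le hb1 hbm
  have hDnn : ∀ i j, 0 ≤ D i j := fun i j => by rcases hD i j with h | h <;> simp [h]
  have hshare : ∀ j k : Fin x, ∃ i, D i j = 1 ∧ D i k = 1 := by
    intro j k
    have h := hloc j k
    rw [Matrix.mul_apply] at h
    by_contra hc
    push_neg at hc
    have hz : ∑ i, D.transpose j i * D i k = 0 := by
      apply Finset.sum_eq_zero
      intro i _
      rcases hD i j with h1 | h1
      · simp [Matrix.transpose_apply, h1]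
      · rcases hD i k with h2 | h2
        · simp [h2]
        · exact absurd h2 (hc i h1)
    rw [hz] at h; exact lt_irrefl 0 h
  set f := D.mulVec s with hf
  have hswap : ∀ S : Finset (Fin m), ∑ i ∈ S, f i = ∑ k, s k * ∑ i ∈ S, D i k := by
    intro S
    simp only [hf, Matrix.mulVec, dotProduct]
    rw [Finset.sum_comm]
    refine Finset.sum_congr rfl fun k _ => ?_
    rw [Finset.mul_sum]
    exact Finset.sum_congr rfl fun i _ => mul_comm _ _
  by_cases hcase : ∃ j : Fin x, (univ.filter (fun i => D i j = 1)).card ≤ b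
  · obtain ⟨j, hj⟩ := hcase
    set S := univ.filter (fun i => D i j = 1) with hS
    have hSne : S.Nonempty := by
      obtain ⟨i, hi, _⟩ := hshare j j
      exact ⟨i, by simp [hS, hi]⟩
    have hcard : 0 < S.card := card_pos.mpr hSne
    have hsum1 : 1 ≤ ∑ i ∈ S, f i := by
      rw [hswap S, ← hsum]
      apply Finset.sum_le_sum
      intro k _
      have h1 : 1 ≤ ∑ i ∈ S, D i k := by
        obtain ⟨i, hi1, hi2⟩ := hshare j k
        have hiS : i ∈ S := by simp [hS, hi1]
        calc (1:ℝ) = D i k := hi2.symm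
        _ ≤ ∑ i ∈ S, D i k := Finset.single_le_sum (fun i _ => hDnn i k) hiS
      nlinarith [hs k]
    have hex : ∃ i ∈ S, (1 : ℝ) / S.card ≤ f i := by
      apply Finset.exists_le_of_sum_le hSne
      rw [Finset.sum_const, nsmul_eq_mul, mul_one_div,
        div_self (by exact_mod_cast hcard.ne' : (S.card : ℝ) ≠ 0)]
      exact hsum1
    obtain ⟨i, _, hi⟩ := hex
    refine ⟨i, le_trans (min_le_right _ _) (le_trans ?_ hi)⟩
    apply one_div_le_one_div_of_le
    · exact_mod_cast hcard
    · exact_mod_cast hj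
  · push_neg at hcase
    have hsum2 : (b + 1 : ℝ) ≤ ∑ i, f i := by
      rw [hswap univ]
      calc (b + 1 : ℝ) = ∑ k, s k * (b + 1) := by rw [← Finset.sum_mul, hsum, one_mul]
      _ ≤ ∑ k, s k * ∑ i, D i k := by
          apply Finset.sum_le_sum
          intro k _
          apply mul_le_mul_of_nonneg_left _ (hs k)
          set F := univ.filter (fun i => D i k = 1) with hF
          have hc : (b:ℝ) + 1 ≤ (F.card : ℝ) := by exact_mod_cast hcase k
          calc (b:ℝ) + 1 ≤ (F.card : ℝ) := hc
          _ = ∑ i ∈ F, D i k := by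
              rw [Finset.sum_congr rfl (fun i hi => (mem_filter.mp hi).2)]
              simp
              rw [hF]
          _ ≤ ∑ i, D i k :=
              Finset.sum_le_sum_of_subset_of_nonneg (filter_subset _ _)
                (fun i _ _ => hDnn i k)
    have hex : ∃ i ∈ (univ : Finset (Fin m)), ((b:ℝ) + 1) / m ≤ f i := by
      apply Finset.exists_le_of_sum_le (univ_nonempty_iff.mpr ⟨⟨0, hm⟩⟩)
      rw [Finset.sum_const, nsmul_eq_mul, card_univ, Fintype.card_fin,
        mul_div_cancel₀ _ (by exact_mod_cast hm.ne' : (m : ℝ) ≠ 0)]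
      exact hsum2
    obtain ⟨i, _, hi⟩ := hex
    exact ⟨i, le_trans (min_le_left _ _) hi⟩
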